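/- Let π : X → Y be a quotient map between a metric space X and a topological space Y, equipped with a measure μ on Y such that for some r₀ > 0 and all x, x' ∈ X with π(x) = π(x'), there is C > 0 with μ(π(B(x,r))) ≤ C·μ(π(B(x',r))) for all r ∈ (0, r₀). Suppose φ : Y → X is an intrinsically (L,α)-Hölder section such that φ(Y) is locally (ℓ+1−α)-Ahlfors–David regular with respect to the pushforward measure φ_*μ. Then any intrinsically (L,α)-Hölder section ψ : Y → X satisfies the upper bound ψ_*μ(B(ψ(y), r) ∩ ψ(Y)) ≤ c₁·C·(L+1)^{ℓ+1−α}·r^{α(ℓ+1−α)} for all y ∈ Y and r ∈ (0, min(r₀,1)), where c₁ is the upper Ahlfors constant of φ. -/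
import Mathlib


open Metric Set MeasureTheory

/-- Ahlfors–David regularity (upper bound): if the graph of an intrinsically
`(L,α)`-Hölder section `φ` is upper `(ℓ+1-α)`-Ahlfors regular for the pushforward of `μ`,
and the measures of projected balls centered on the same fiber are comparable, then any
intrinsically `(L,α)`-Hölder section `ψ` satisfies the corresponding upper bound with
exponent `α(ℓ+1-α)`. -/
theorem stmt16 {X Y : Type*} [MetricSpace X] [TopologicalSpace Y] [MeasurableSpace Y]
    (π : X → Y) (hπc : Continuous π) (hπo : IsOpenMap π) (hπs : Function.Surjective π)
    (μ : Measure Y) (r₀ C : ℝ) (hr₀ : 0 < r₀) (hC : 0 < C)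
    (hcmp : ∀ x x' : X, π x = π x' → ∀ r : ℝ, 0 < r → r < r₀ →
      μ (π '' ball x r) ≤ ENNReal.ofReal C * μ (π '' ball x' r))
    (L α ℓ c₁ : ℝ) (hL : 0 < L) (hα : α ∈ Set.Ioo (0:ℝ) 1) (hℓ : 0 < ℓ) (hc₁ : 0 < c₁)
    (φ : Y → X) (hφsec : ∀ y, π (φ y) = y)
    (hφ : ∀ y₁ y₂ : Y, dist (φ y₁) (φ y₂) ≤
      L * (infDist (φ y₁) (π ⁻¹' {y₂})) ^ α + infDist (φ y₁) (π ⁻¹' {y₂}))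
    (hAD : ∀ y : Y, ∀ r : ℝ, 0 < r →
      μ (φ ⁻¹' (ball (φ y) r ∩ Set.range φ)) ≤ ENNReal.ofReal (c₁ * r ^ (ℓ + 1 - α)))
    (ψ : Y → X) (hψsec : ∀ y, π (ψ y) = y)
    (hψ : ∀ y₁ y₂ : Y, dist (ψ y₁) (ψ y₂) ≤
      L * (infDist (ψ y₁) (π ⁻¹' {y₂})) ^ α + infDist (ψ y₁) (π ⁻¹' {y₂})) :
    ∀ y : Y, ∀ r : ℝ, 0 < r → r < min r₀ 1 →
      μ (ψ ⁻¹' (ball (ψ y) r ∩ Set.range ψ)) ≤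
        ENNReal.ofReal (c₁ * C * (L + 1) ^ (ℓ + 1 - α) * r ^ (α * (ℓ + 1 - α))) := by
  intro y r hr hrlt
  have hrr₀ : r < r₀ := lt_of_lt_of_le hrlt (min_le_left _ _)
  have hr1 : r < 1 := lt_of_lt_of_le hrlt (min_le_right _ _)
  set R := (L + 1) * r ^ α with hR
  have hrαpos : 0 < r ^ α := Real.rpow_pos_of_pos hr α
  have hRpos : 0 < R := mul_pos (by linarith) hrαpos
  have h1 : ψ ⁻¹' (ball (ψ y) r ∩ Set.range ψ) ⊆ π '' ball (ψ y) r := by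
    rintro y' ⟨hb, -⟩
    exact ⟨ψ y', hb, hψsec y'⟩
  have h2 := hcmp (ψ y) (φ y) (by rw [hψsec, hφsec]) r hr hrr₀
  have h3 : π '' ball (φ y) r ⊆ φ ⁻¹' (ball (φ y) R ∩ Set.range φ) := by
    rintro y' ⟨x, hx, rfl⟩
    refine ⟨?_, ⟨_, rfl⟩⟩
    have hx' : x ∈ π ⁻¹' {π x} := rfl
    have hd : infDist (φ y) (π ⁻¹' {π x}) < r := by
      refine lt_of_le_of_lt (infDist_le_dist_of_mem hx') ?_
      rw [dist_comm]; exact mem_ball.mp hx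
    have hd0 : 0 ≤ infDist (φ y) (π ⁻¹' {π x}) := infDist_nonneg
    have hpow : infDist (φ y) (π ⁻¹' {π x}) ^ α < r ^ α :=
      Real.rpow_lt_rpow hd0 hd hα.1
    have hrα : r < r ^ α := by
      have := Real.rpow_lt_rpow_of_exponent_gt hr hr1 hα.2
      rwa [Real.rpow_one] at this
    have hb := hφ y (π x)
    have hlt : dist (φ y) (φ (π x)) < R := by
      have : L * infDist (φ y) (π ⁻¹' {π x}) ^ α + infDist (φ y) (π ⁻¹' {π x}) <
          (L + 1) * r ^ α := by nlinarith
      linarith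
    rw [mem_ball, dist_comm]
    exact hlt
  have h4 := hAD y R hRpos
  calc μ (ψ ⁻¹' (ball (ψ y) r ∩ Set.range ψ))
      ≤ μ (π '' ball (ψ y) r) := measure_mono h1
    _ ≤ ENNReal.ofReal C * μ (π '' ball (φ y) r) := h2
    _ ≤ ENNReal.ofReal C * μ (φ ⁻¹' (ball (φ y) R ∩ Set.range φ)) :=
        mul_le_mul_right (measure_mono h3) _
    _ ≤ ENNReal.ofReal C * ENNReal.ofReal (c₁ * R ^ (ℓ + 1 - α)) :=
        mul_le_mul_right h4 _
    _ = ENNReal.ofReal (c₁ * C * (L + 1) ^ (ℓ + 1 - α) * r ^ (α * (ℓ + 1 - α))) := by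
        rw [← ENNReal.ofReal_mul hC.le]
        congr 1
        rw [hR, Real.mul_rpow (by linarith) hrαpos.le, ← Real.rpow_mul hr.le]
        ring
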